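/- Let A₁ - λB₁ and A₂ - λB₂ be regular pencils of sizes n₁×n₁ and n₂×n₂ over ℂ with disjoint spectra (including ∞ appropriately: not both pencils have an infinite eigenvalue at the same 'value'). Then the only pair U, V ∈ ℂ^{n₁×n₂} satisfying A₁ U = V A₂ and B₁ U = V B₂ is U = V = 0. -/

import Mathlib

open Matrix Polynomial

lemma pencil_aux {n₁ n₂ : ℕ} (A₁ B₁ : Matrix (Fin n₁) (Fin n₁) ℂ)
    (A₂ B₂ : Matrix (Fin n₂) (Fin n₂) ℂ)
    (hdisj : ∀ lam : ℂ, ¬((A₁ - lam • B₁).det = 0 ∧ (A₂ - lam • B₂).det = 0))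
    (hB₂ : IsUnit B₂.det)
    (U V : Matrix (Fin n₁) (Fin n₂) ℂ)
    (hA : A₁ * U = V * A₂) (hB : B₁ * U = V * B₂) :
    U = 0 ∧ V = 0 := by
  set S : Matrix (Fin n₂) (Fin n₂) ℂ := B₂⁻¹ * A₂ with hS
  have hBB : B₂ * B₂⁻¹ = 1 := Matrix.mul_nonsing_inv B₂ hB₂
  have hV : V = B₁ * U * B₂⁻¹ := by
    calc V = V * (B₂ * B₂⁻¹) := by rw [hBB, Matrix.mul_one]
    _ = (V * B₂) * B₂⁻¹ := by rw [Matrix.mul_assoc]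
    _ = B₁ * U * B₂⁻¹ := by rw [← hB]
  have key : A₁ * U = B₁ * U * S := by
    rw [hA, hV, hS]
    simp only [Matrix.mul_assoc]
  have hfact : ∀ r : ℂ, A₂ - r • B₂ = B₂ * (S - r • 1) := by
    intro r
    rw [Matrix.mul_sub, hS, ← Matrix.mul_assoc, hBB, Matrix.one_mul, Matrix.mul_smul,
      Matrix.mul_one]
  -- the one-step argument
  have step : ∀ r : ℂ, (A₂ - r • B₂).det = 0 → ∀ w : Fin n₂ → ℂ,
      U.mulVec (S.mulVec w) = r • U.mulVec w → U.mulVec w = 0 := by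
    intro r hr w hw
    have h1 : (A₁ - r • B₁).det ≠ 0 := fun h => hdisj r ⟨h, hr⟩
    have h2 : (A₁ - r • B₁).mulVec (U.mulVec w) = 0 := by
      have hAU : A₁.mulVec (U.mulVec w) = B₁.mulVec (U.mulVec (S.mulVec w)) := by
        simp only [Matrix.mulVec_mulVec]
        rw [key, Matrix.mul_assoc]
      rw [Matrix.sub_mulVec, hAU, hw, Matrix.smul_mulVec, Matrix.mulVec_smul]
      simp
    have hu : IsUnit (A₁ - r • B₁).det := isUnit_iff_ne_zero.mpr h1
    have := congrArg (fun x => (A₁ - r • B₁)⁻¹.mulVec x) h2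
    simpa [Matrix.mulVec_mulVec, ← Matrix.mul_assoc,
      Matrix.nonsing_inv_mul _ hu] using this
  -- induction over a list of "bad" values
  have main : ∀ l : List ℂ, (∀ r ∈ l, (A₂ - r • B₂).det = 0) →
      ∀ v : Fin n₂ → ℂ,
        ((l.map (fun r => S - r • 1)).prod).mulVec v = 0 → U.mulVec v = 0 := by
    intro l
    induction l with
    | nil =>
      intro _ v hv
      simp only [List.map_nil, List.prod_nil, Matrix.one_mulVec] at hv
      simp [hv]
    | cons a m ih =>
      intro hmem v hv
      have hcomm : Commute (S - a • 1) ((m.map (fun r => S - r • 1)).prod) := by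
        apply Commute.list_prod_right
        intro x hx
        obtain ⟨b, _, rfl⟩ := List.mem_map.mp hx
        have c1 : Commute S ((b : ℂ) • (1 : Matrix (Fin n₂) (Fin n₂) ℂ)) :=
          (Commute.one_right S).smul_right b
        have c2 : Commute ((a : ℂ) • (1 : Matrix (Fin n₂) (Fin n₂) ℂ)) S :=
          (Commute.one_left S).smul_left a
        have c3 : Commute ((a : ℂ) • (1 : Matrix (Fin n₂) (Fin n₂) ℂ))
            ((b : ℂ) • (1 : Matrix (Fin n₂) (Fin n₂) ℂ)) :=
          ((Commute.refl (1 : Matrix (Fin n₂) (Fin n₂) ℂ)).smul_left a).smul_right b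
        exact ((Commute.refl S).sub_right c1).sub_left (c2.sub_right c3)
      rw [List.map_cons, List.prod_cons, hcomm.eq, ← Matrix.mulVec_mulVec] at hv
      have hUw : U.mulVec ((S - a • 1).mulVec v) = 0 :=
        ih (fun r hr => hmem r (List.mem_cons_of_mem a hr)) _ hv
      have hSv : U.mulVec (S.mulVec v) = a • U.mulVec v := by
        rw [Matrix.sub_mulVec, Matrix.smul_mulVec, Matrix.one_mulVec,
          Matrix.mulVec_sub, Matrix.mulVec_smul] at hUw
        exact sub_eq_zero.mp hUw
      exact step a (hmem a (List.mem_cons_self)) v hSv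
  -- roots of charpoly S are bad values
  have hroot : ∀ r ∈ S.charpoly.roots, (A₂ - r • B₂).det = 0 := by
    intro r hr
    have hev : S.charpoly.eval r = 0 :=
      (Polynomial.mem_roots (Matrix.charpoly_monic S).ne_zero).mp hr
    have hev2 : S.charpoly.eval r = (r • (1 : Matrix (Fin n₂) (Fin n₂) ℂ) - S).det := by
      rw [Matrix.charpoly]
      have : S.charmatrix.det.eval r = ((evalRingHom r).mapMatrix S.charmatrix).det := by
        rw [← RingHom.map_det]; rfl
      rw [this]
      congr 1
      ext i j
      by_cases h : i = j <;>
        simp [Matrix.charmatrix_apply, Matrix.map_apply, h, Matrix.one_apply,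
          Matrix.diagonal_apply, Matrix.sub_apply, Matrix.smul_apply]
    have hdet : (S - r • 1).det = 0 := by
      rw [(neg_sub (r • (1 : Matrix (Fin n₂) (Fin n₂) ℂ)) S).symm, Matrix.det_neg,
        ← hev2, hev, mul_zero]
    rw [hfact r, Matrix.det_mul, hdet, mul_zero]
  -- Cayley-Hamilton
  set l : List ℂ := S.charpoly.roots.toList with hl
  have hCH : ((l.map (fun r => S - r • 1)).prod) = 0 := by
    have hsplit : S.charpoly = (S.charpoly.roots.map (fun r => X - C r)).prod :=
      (IsAlgClosed.splits S.charpoly).eq_prod_roots_of_monic (Matrix.charpoly_monic S)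
    have h1 : ((l.map (fun r => X - C r)).prod : ℂ[X]) = S.charpoly := by
      rw [hsplit, ← Multiset.coe_toList S.charpoly.roots, Multiset.map_coe,
        Multiset.prod_coe]
    have h2 := Matrix.aeval_self_charpoly S
    rw [← h1, map_list_prod (aeval S) _] at h2
    rw [← h2, List.map_map]
    congr 1
    apply List.map_congr_left
    intro r _
    simp [Algebra.algebraMap_eq_smul_one]
  have hU : U = 0 := by
    apply Matrix.toLin'.injective
    apply LinearMap.ext
    intro v
    have hz : U.mulVec v = 0 := by
      refine main l (fun r hr => hroot r ?_) v (by rw [hCH]; simp)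
      rw [hl] at hr
      exact (Multiset.mem_toList).mp hr
    simpa [Matrix.toLin'_apply] using hz
  exact ⟨hU, by rw [hV, hU, Matrix.mul_zero, Matrix.zero_mul]⟩

/-- If `A₁ - λB₁` and `A₂ - λB₂` are regular pencils with disjoint
spectra (including `∞`), then `A₁ U = V A₂` and `B₁ U = V B₂` imply `U = V = 0`. -/
theorem coupled_pencil_equations_unique
    (n₁ n₂ : ℕ) (A₁ B₁ : Matrix (Fin n₁) (Fin n₁) ℂ)
    (A₂ B₂ : Matrix (Fin n₂) (Fin n₂) ℂ)
    (hreg₁ : ∃ μ : ℂ, (A₁ - μ • B₁).det ≠ 0)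
    (hreg₂ : ∃ μ : ℂ, (A₂ - μ • B₂).det ≠ 0)
    (hdisj : ∀ lam : ℂ, ¬((A₁ - lam • B₁).det = 0 ∧ (A₂ - lam • B₂).det = 0))
    (hinf : ¬(B₁.det = 0 ∧ B₂.det = 0))
    (U V : Matrix (Fin n₁) (Fin n₂) ℂ)
    (hA : A₁ * U = V * A₂) (hB : B₁ * U = V * B₂) :
    U = 0 ∧ V = 0 := by
  by_cases h2 : B₂.det = 0
  · -- then B₁ is invertible; transpose the problem
    have h1 : B₁.det ≠ 0 := fun h => hinf ⟨h, h2⟩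
    have hdisj' : ∀ lam : ℂ,
        ¬((A₂ᵀ - lam • B₂ᵀ).det = 0 ∧ (A₁ᵀ - lam • B₁ᵀ).det = 0) := by
      intro lam ⟨ha, hb⟩
      apply hdisj lam
      constructor
      · rw [← Matrix.det_transpose, Matrix.transpose_sub, Matrix.transpose_smul]; exact hb
      · rw [← Matrix.det_transpose, Matrix.transpose_sub, Matrix.transpose_smul]; exact ha
    have hB₁' : IsUnit (B₁ᵀ).det := by
      rw [Matrix.det_transpose]; exact isUnit_iff_ne_zero.mpr h1
    have hA' : A₂ᵀ * Vᵀ = Uᵀ * A₁ᵀ := by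
      rw [← Matrix.transpose_mul, ← hA, Matrix.transpose_mul]
    have hB' : B₂ᵀ * Vᵀ = Uᵀ * B₁ᵀ := by
      rw [← Matrix.transpose_mul, ← hB, Matrix.transpose_mul]
    obtain ⟨hVt, hUt⟩ := pencil_aux A₂ᵀ B₂ᵀ A₁ᵀ B₁ᵀ hdisj' hB₁' Vᵀ Uᵀ hA' hB'
    constructor
    · rw [← Matrix.transpose_transpose U, hUt, Matrix.transpose_zero]
    · rw [← Matrix.transpose_transpose V, hVt, Matrix.transpose_zero]
  · exact pencil_aux A₁ B₁ A₂ B₂ hdisj (isUnit_iff_ne_zero.mpr h2) U V hA hB
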